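/- Let X be an integral separated scheme and f : X → X a dominant endomorphism such that f^m = f^n for some natural numbers m < n. Then f is an automorphism of X, and in fact f^(n-m) is the identity morphism of X. -/
import Mathlib


open AlgebraicGeometry CategoryTheory

lemma end_pow_comp_aux {X : Scheme} (f : End X) (a b : ℕ) :
    (f ^ (a + b) : X ⟶ X) = (f ^ b : X ⟶ X) ≫ (f ^ a : X ⟶ X) := by
  rw [pow_add, End.mul_def]

/-- An integral separated scheme's dominant endomorphism satisfying `f^m = f^n` with `m < n`
is an automorphism, and `f^(n-m)` is the identity. -/
theorem dominant_endo_of_finite_order_isAut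
    (X : Scheme) [IsIntegral X] [X.IsSeparated]
    (f : End X) (hdom : Dense (Set.range f.base))
    (m n : ℕ) (hmn : m < n) (h : f ^ m = f ^ n) :
    IsIso (f : X ⟶ X) ∧ f ^ (n - m) = 𝟙 X := by
  have hd : IsDominant (f : X ⟶ X) := ⟨hdom⟩
  have hdpow : ∀ k, IsDominant (f ^ k : X ⟶ X) := by
    intro k
    induction k with
    | zero => simpa using (inferInstance : IsDominant (𝟙 X))
    | succ k ih => rw [pow_succ, End.mul_def]; exact inferInstance
  have := hdpow m
  have hsep : IsSeparated (Limits.terminal.from X) :=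
    Scheme.IsSeparated.isSeparated_terminal_from
  have key : (f ^ (n - m) : X ⟶ X) = 𝟙 X := by
    apply ext_of_isDominant_of_isSeparated (Limits.terminal.from X)
      (Limits.terminal.hom_ext _ _) (f ^ m : X ⟶ X)
    rw [Category.comp_id, ← end_pow_comp_aux, Nat.sub_add_cancel hmn.le, h]
  refine ⟨?_, key⟩
  obtain ⟨k, hk⟩ : ∃ k, n - m = k + 1 := ⟨n - m - 1, by omega⟩
  rw [hk] at key
  refine ⟨(f ^ k : X ⟶ X), ?_, ?_⟩
  · have : (f ^ (k + 1) : X ⟶ X) = (f : X ⟶ X) ≫ (f ^ k : X ⟶ X) := by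
      rw [end_pow_comp_aux, pow_one]
    rw [← this, key]
  · have : (f ^ (k + 1) : X ⟶ X) = (f ^ k : X ⟶ X) ≫ (f : X ⟶ X) := by
      rw [Nat.add_comm, end_pow_comp_aux, pow_one]
    rw [← this, key]
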